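/- Let q be an odd prime power, S the set of squares and N the set of non-squares in 𝔽_q^×, and T = {z ∈ 𝔽_{q²}^× \ 𝔽_q^× : z^{q+1} ∈ {1} ∪ N}. For every nontrivial group homomorphism λ: 𝔽_q^× → ℂ^×, one has ∑_{z ∈ T} λ(z^{q+1}) = (q−1) − (q+1)·∑_{s ∈ S} λ(s). -/

import Mathlib

open scoped Classical

/-- character sum of `λ(z^{q+1})` over
`T = {z ∈ 𝔽_{q²}^× \ 𝔽_q^× : z^{q+1} ∈ {1} ∪ N}`. -/
theorem stmt_9 (q p n : ℕ) (hp : p.Prime) (hq : q = p ^ n) (hn : n ≠ 0) (hodd : Odd q)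
    (F K : Type) [Field F] [Field K] [Fintype F] [Fintype K] [Algebra F K]
    (hF : Fintype.card F = q) (hK : Fintype.card K = q ^ 2)
    (Nm : Kˣ → Fˣ) (hNm : ∀ z : Kˣ, algebraMap F K (Nm z) = (z : K) ^ (q + 1))
    (lam : Fˣ →* ℂˣ) (hlam : lam ≠ 1) :
    ∑ z ∈ Finset.univ.filter (fun z : Kˣ =>
        (z : K) ∉ Set.range (algebraMap F K) ∧
          (Nm z = 1 ∨ ¬ ∃ w : Fˣ, w ^ 2 = Nm z)),
      ((lam (Nm z) : ℂˣ) : ℂ)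
    = ((q : ℂ) - 1) - ((q : ℂ) + 1) *
        ∑ s ∈ Finset.univ.filter (fun s : Fˣ => ∃ w : Fˣ, w ^ 2 = s),
          ((lam s : ℂˣ) : ℂ) := by
  have hq2 : 2 ≤ q := by rw [hq]; exact Nat.one_lt_pow hn hp.one_lt
  have hinj : Function.Injective (algebraMap F K) := (algebraMap F K).injective
  have hcardF : Fintype.card Fˣ = q - 1 := by rw [Fintype.card_units, hF]
  have hcardK : Fintype.card Kˣ = q ^ 2 - 1 := by rw [Fintype.card_units, hK]
  -- Nm as a monoid hom
  have hmul : ∀ z w : Kˣ, Nm (z * w) = Nm z * Nm w := by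
    intro z w
    apply Units.ext
    apply hinj
    simp only [Units.val_mul, map_mul, hNm, mul_pow]
  have hone : Nm 1 = 1 := by
    apply Units.ext; apply hinj
    simp only [hNm, Units.val_one, one_pow, map_one]
  set φ : Kˣ →* Fˣ := { toFun := Nm, map_one' := hone, map_mul' := hmul } with hφ
  have hφapp : ∀ z, φ z = Nm z := fun z => rfl
  -- kernel characterization : φ z = 1 ↔ z ^ (q+1) = 1
  have hker : ∀ z : Kˣ, φ z = 1 ↔ z ^ (q + 1) = 1 := by
    intro z
    constructor
    · intro h
      have h2 : Nm z = 1 := h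
      apply Units.ext
      rw [Units.val_pow_eq_pow_val, Units.val_one, ← hNm z, h2, Units.val_one, map_one]
    · intro h
      apply Units.ext
      apply hinj
      show algebraMap F K ((Nm z : F)) = algebraMap F K ((1 : Fˣ) : F)
      rw [hNm z, Units.val_one, map_one, ← Units.val_pow_eq_pow_val, h, Units.val_one]
  -- bound on kernel size
  have hc_le : (Finset.univ.filter (fun z : Kˣ => φ z = 1)).card ≤ q + 1 := by
    have h1 : (Finset.univ.filter (fun z : Kˣ => φ z = 1)).card
        = (Finset.univ.filter (fun z : Kˣ => z ^ (q + 1) = 1)).card := by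
      congr 1; apply Finset.filter_congr; intro z _; simp [hker z]
    rw [h1]
    calc (Finset.univ.filter (fun z : Kˣ => z ^ (q + 1) = 1)).card
        ≤ Multiset.card (Polynomial.nthRoots (q + 1) ((Units.coeHom K) (1 : Kˣ))) := by
          apply card_nthRoots_subgroup_units (Units.coeHom K) (fun a b h => Units.ext h) (by omega)
      _ ≤ q + 1 := Polynomial.card_nthRoots _ _
  -- fibers over range elements all have the same cardinality
  set R : Finset Fˣ := Finset.univ.image φ with hR
  set c : ℕ := (Finset.univ.filter (fun z : Kˣ => φ z = 1)).card with hc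
  have hfib_mem : ∀ a ∈ R, (Finset.univ.filter (fun z : Kˣ => φ z = a)).card = c := by
    intro a ha
    rw [Finset.mem_image] at ha
    obtain ⟨z, _, hz⟩ := ha
    exact MonoidHom.card_fiber_eq_of_mem_range φ ⟨z, hz⟩ ⟨1, map_one φ⟩
  have hsum_card : q ^ 2 - 1 = R.card * c := by
    have h1 : (Finset.univ : Finset Kˣ).card
        = ∑ b ∈ R, (Finset.univ.filter (fun z : Kˣ => φ z = b)).card := by
      apply Finset.card_eq_sum_card_fiberwise
      intro z _
      exact Finset.mem_image_of_mem φ (Finset.mem_univ z)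
    rw [Finset.card_univ, hcardK] at h1
    rw [h1, Finset.sum_congr rfl hfib_mem, Finset.sum_const, smul_eq_mul]
  have hRle : R.card ≤ q - 1 := by
    calc R.card ≤ Fintype.card Fˣ := Finset.card_le_univ R
      _ = q - 1 := hcardF
  -- deduce exact values
  obtain ⟨m, rfl⟩ : ∃ m, q = m + 2 := ⟨q - 2, by omega⟩
  have hfact : (m + 2) ^ 2 - 1 = (m + 1) * (m + 3) := by
    have h1 : (m + 2) ^ 2 = m * m + 4 * m + 4 := by ring
    have h2 : (m + 1) * (m + 3) = m * m + 4 * m + 3 := by ring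
    omega
  rw [hfact] at hsum_card
  have hRcard : R.card = m + 1 := by
    have h1 : (m + 1) * (m + 3) ≤ R.card * (m + 3) :=
      hsum_card ▸ Nat.mul_le_mul_left R.card (by omega)
    have h2 : m + 1 ≤ R.card := Nat.le_of_mul_le_mul_right h1 (by omega)
    omega
  have hcval : c = m + 3 := by
    rw [hRcard] at hsum_card
    exact (Nat.eq_of_mul_eq_mul_left (by omega) hsum_card.symm)
  -- surjectivity
  have hsurj : ∀ a : Fˣ, ∃ z : Kˣ, φ z = a := by
    have hRuniv : R = Finset.univ := Finset.eq_univ_of_card R (by rw [hRcard, hcardF]; omega)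
    intro a
    have ha : a ∈ R := hRuniv ▸ Finset.mem_univ a
    rw [Finset.mem_image] at ha
    obtain ⟨z, _, hz⟩ := ha
    exact ⟨z, hz⟩
  have hfib : ∀ a : Fˣ, (Finset.univ.filter (fun z : Kˣ => φ z = a)).card = m + 3 := by
    intro a
    rw [← hcval]
    apply hfib_mem
    obtain ⟨z, hz⟩ := hsurj a
    rw [Finset.mem_image]; exact ⟨z, Finset.mem_univ z, hz⟩
  -- the indicator-weighted character
  set f : Fˣ → ℂ := fun a => if (a = 1 ∨ ¬ ∃ w : Fˣ, w ^ 2 = a) then ((lam a : ℂˣ) : ℂ) else 0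
    with hf
  -- total sum over Kˣ
  have htotal : ∀ g : Fˣ → ℂ, ∑ z : Kˣ, g (φ z) = (m + 3 : ℕ) * ∑ a : Fˣ, g a := by
    intro g
    have h1 : ∑ a : Fˣ, ∑ z ∈ Finset.univ.filter (fun z : Kˣ => φ z = a), g (φ z)
        = ∑ z ∈ Finset.univ.filter (fun z : Kˣ => φ z ∈ (Finset.univ : Finset Fˣ)), g (φ z) :=
      Finset.sum_fiberwise_eq_sum_filter _ _ _ _
    simp only [Finset.mem_univ, Finset.filter_true] at h1
    rw [← h1]
    rw [Finset.mul_sum]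
    apply Finset.sum_congr rfl
    intro a _
    have hcongr : ∑ z ∈ Finset.univ.filter (fun z : Kˣ => φ z = a), g (φ z)
        = ∑ _z ∈ Finset.univ.filter (fun z : Kˣ => φ z = a), g a := by
      apply Finset.sum_congr rfl
      intro z hz
      rw [Finset.mem_filter] at hz
      rw [hz.2]
    rw [hcongr, Finset.sum_const, nsmul_eq_mul, hfib a]
  -- sum of lam over all of Fˣ is zero
  have hlamsum : ∑ a : Fˣ, ((lam a : ℂˣ) : ℂ) = 0 := by
    have h := sum_hom_units_eq_zero ((Units.coeHom ℂ).comp lam) (by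
      intro h
      apply hlam
      apply MonoidHom.ext
      intro a
      show lam a = 1
      exact Units.ext (by simpa using DFunLike.congr_fun h a))
    simpa using h
  -- char ≠ 2 facts
  have hne : (1 : Fˣ) ≠ -1 := by
    intro h
    have h2 : ((-1 : Fˣ) : F) = ((1 : Fˣ) : F) := by rw [← h]
    rw [Units.val_neg, Units.val_one, neg_one_eq_one_iff] at h2
    have h3 := FiniteField.even_card_iff_char_two.mp h2
    rw [hF] at h3
    rcases hodd with ⟨k, hk⟩
    omega
  -- sum of f over Fˣ
  have hS : ∑ a : Fˣ, f a
      = 1 - ∑ s ∈ Finset.univ.filter (fun s : Fˣ => ∃ w : Fˣ, w ^ 2 = s), ((lam s : ℂˣ) : ℂ) := by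
    have hsplit := Finset.sum_filter_add_sum_filter_not (Finset.univ : Finset Fˣ)
      (fun s : Fˣ => ∃ w : Fˣ, w ^ 2 = s) (fun s => ((lam s : ℂˣ) : ℂ))
    have h2 : ∑ a : Fˣ, f a
        = ∑ a ∈ Finset.univ.filter (fun a : Fˣ => a = 1 ∨ ¬ ∃ w : Fˣ, w ^ 2 = a),
            ((lam a : ℂˣ) : ℂ) := by
      rw [Finset.sum_filter]
    have h3 : Finset.univ.filter (fun a : Fˣ => a = 1 ∨ ¬ ∃ w : Fˣ, w ^ 2 = a)
        = insert 1 (Finset.univ.filter (fun a : Fˣ => ¬ ∃ w : Fˣ, w ^ 2 = a)) := by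
      ext a
      simp only [Finset.mem_filter, Finset.mem_univ, true_and, Finset.mem_insert]
    have h4 : (1 : Fˣ) ∉ Finset.univ.filter (fun a : Fˣ => ¬ ∃ w : Fˣ, w ^ 2 = a) := by
      simp only [Finset.mem_filter, Finset.mem_univ, true_and, not_not]
      exact ⟨1, one_pow 2⟩
    rw [h2, h3, Finset.sum_insert h4, map_one]
    have h5 : ∑ a ∈ Finset.univ.filter (fun a : Fˣ => ¬ ∃ w : Fˣ, w ^ 2 = a),
        ((lam a : ℂˣ) : ℂ)
        = - ∑ s ∈ Finset.univ.filter (fun s : Fˣ => ∃ w : Fˣ, w ^ 2 = s),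
            ((lam s : ℂˣ) : ℂ) := by
      rw [hlamsum] at hsplit
      linear_combination hsplit
    rw [h5]
    push_cast
    ring
  -- identify the F-embedded units
  set e : Fˣ →* Kˣ := Units.map (algebraMap F K : F →* K) with he
  have heinj : Function.Injective e := Units.map_injective hinj
  have himg : Finset.univ.filter (fun z : Kˣ => (z : K) ∈ Set.range (algebraMap F K))
      = Finset.univ.image e := by
    ext z
    simp only [Finset.mem_filter, Finset.mem_univ, true_and, Finset.mem_image]
    constructor
    · rintro ⟨x, hx⟩
      have hx0 : x ≠ 0 := by
        rintro rfl
        simp only [map_zero] at hx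
        exact z.ne_zero hx.symm
      refine ⟨Units.mk0 x hx0, ?_⟩
      apply Units.ext
      exact hx
    · rintro ⟨x, hx⟩
      exact ⟨(x : F), by rw [← hx]; rfl⟩
  have hφe : ∀ x : Fˣ, φ (e x) = x ^ 2 := by
    intro x
    apply Units.ext
    apply hinj
    rw [hφapp, hNm (e x)]
    have h1 : ((e x : Kˣ) : K) = algebraMap F K x := rfl
    rw [h1, ← map_pow]
    congr 1
    have h3 : x ^ (m + 1) = 1 := by
      have h4 := pow_card_eq_one (G := Fˣ) (x := x)
      rwa [hcardF] at h4
    have h4 : (x : F) ^ (m + 1) = 1 := by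
      have h5 := congrArg Units.val h3
      rw [Units.val_pow_eq_pow_val, Units.val_one] at h5
      exact h5
    calc (x : F) ^ (m + 2 + 1) = (x : F) ^ (m + 1) * (x : F) ^ 2 := by ring
      _ = ((x ^ 2 : Fˣ) : F) := by rw [h4, one_mul, Units.val_pow_eq_pow_val]
  -- sum of f over embedded F-units is 2
  have hB : ∑ z ∈ Finset.univ.filter
      (fun z : Kˣ => (z : K) ∈ Set.range (algebraMap F K)), f (φ z) = 2 := by
    rw [himg, Finset.sum_image (fun x _ y _ h => heinj h)]
    have h1 : ∀ x : Fˣ, f (φ (e x)) = if x ^ 2 = 1 then 1 else 0 := by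
      intro x
      rw [hφe x, hf]
      by_cases hx : x ^ 2 = 1
      · simp [hx]
      · have hcond : ¬ (x ^ 2 = (1 : Fˣ) ∨ ¬ ∃ w : Fˣ, w ^ 2 = x ^ 2) := by
          push_neg
          exact ⟨hx, x, rfl⟩
        simp [hcond, hx]
    rw [Finset.sum_congr rfl (fun x _ => h1 x)]
    rw [← Finset.sum_filter]
    have h2 : Finset.univ.filter (fun x : Fˣ => x ^ 2 = 1) = {1, -1} := by
      ext x
      simp only [Finset.mem_filter, Finset.mem_univ, true_and, Finset.mem_insert,
        Finset.mem_singleton]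
      constructor
      · intro hx
        have hx2 : (x : F) ^ 2 = 1 := by
          have h5 := congrArg (Units.val) hx
          push_cast at h5
          simpa using h5
        have hz : ((x : F) - 1) * ((x : F) + 1) = 0 := by linear_combination hx2
        rcases mul_eq_zero.mp hz with h | h
        · left; apply Units.ext
          rw [Units.val_one]; exact sub_eq_zero.mp h
        · right; apply Units.ext
          rw [Units.val_neg, Units.val_one]
          exact eq_neg_of_add_eq_zero_left h
      · rintro (rfl | rfl) <;> simp
    rw [h2]
    rw [Finset.sum_pair (by exact hne)]
    norm_num
  -- combine
  have hmain : ∑ z ∈ Finset.univ.filter (fun z : Kˣ =>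
        (z : K) ∉ Set.range (algebraMap F K) ∧
          (Nm z = 1 ∨ ¬ ∃ w : Fˣ, w ^ 2 = Nm z)),
      ((lam (Nm z) : ℂˣ) : ℂ)
      = ∑ z ∈ Finset.univ.filter
          (fun z : Kˣ => (z : K) ∉ Set.range (algebraMap F K)), f (φ z) := by
    rw [← Finset.filter_filter, Finset.sum_filter]
    apply Finset.sum_congr rfl
    intro z _
    simp only [hf, hφapp]
  have hsplitK := Finset.sum_filter_add_sum_filter_not (Finset.univ : Finset Kˣ)
    (fun z : Kˣ => (z : K) ∈ Set.range (algebraMap F K)) (fun z => f (φ z))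
  have htot := htotal f
  rw [hS] at htot
  have hnot : ∑ z ∈ Finset.univ.filter
      (fun z : Kˣ => (z : K) ∉ Set.range (algebraMap F K)), f (φ z)
      = (m + 3 : ℕ) * (1 - ∑ s ∈ Finset.univ.filter (fun s : Fˣ => ∃ w : Fˣ, w ^ 2 = s),
          ((lam s : ℂˣ) : ℂ)) - 2 := by
    have hsp : ∑ z ∈ Finset.univ.filter
        (fun z : Kˣ => ¬ (z : K) ∈ Set.range (algebraMap F K)), f (φ z)
        = (∑ z : Kˣ, f (φ z)) - ∑ z ∈ Finset.univ.filter
            (fun z : Kˣ => (z : K) ∈ Set.range (algebraMap F K)), f (φ z) := by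
      rw [← hsplitK]; ring
    rw [hsp, hB, htot]
  rw [hmain, hnot]
  push_cast
  ring
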